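/- arXiv:1806.03614 — 2 statements merged into one kernel-verified Lean document; each statement's English description precedes it below -/
import Mathlib

section
/- Let G be a finite abelian group of order n, D(G) its generalized dihedral group (assumed non-abelian), \Gamma the commuting graph of D(G), and z = |{g \in G : g^2 = e}| with z \ge 2. Then the number of resolving sets of \Gamma of minimum cardinality 2n - n/z - 2 equals (n - z) · z^{n/z + 1}. -/
/-- The generalized dihedral group `D(G) = G ⋊ C₂`, with `⟨g, false⟩`
representing `(g, 1)` and `⟨g, true⟩` representing `(g, -1)`.
Multiplication is `(g₁, c₁)(g₂, c₂) = (g₁ g₂^{c₁}, c₁ c₂)`, i.e. `-1` acts by inversion. -/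
@[ext]
structure GenDihedral (G : Type) where
  g : G
  b : Bool
  deriving DecidableEq

namespace GenDihedral

variable {G : Type} [CommGroup G]

instance : Mul (GenDihedral G) :=
  ⟨fun a c => ⟨a.g * (if a.b then c.g⁻¹ else c.g), xor a.b c.b⟩⟩

instance : One (GenDihedral G) := ⟨⟨1, false⟩⟩

instance : Inv (GenDihedral G) := ⟨fun a => ⟨if a.b then a.g else a.g⁻¹, a.b⟩⟩

theorem mul_def (a c : GenDihedral G) :
    a * c = ⟨a.g * (if a.b then c.g⁻¹ else c.g), xor a.b c.b⟩ := rfl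

theorem one_def : (1 : GenDihedral G) = ⟨1, false⟩ := rfl

theorem inv_def (a : GenDihedral G) : a⁻¹ = ⟨if a.b then a.g else a.g⁻¹, a.b⟩ := rfl

instance : Group (GenDihedral G) where
  mul_assoc a c d := by
    obtain ⟨g₁, b₁⟩ := a; obtain ⟨g₂, b₂⟩ := c; obtain ⟨g₃, b₃⟩ := d
    cases b₁ <;> cases b₂ <;> cases b₃ <;>
      simp [mul_def, mul_assoc, mul_comm, mul_left_comm, mul_inv, inv_inv]
  one_mul a := by obtain ⟨g, b⟩ := a; cases b <;> simp [mul_def, one_def]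
  mul_one a := by obtain ⟨g, b⟩ := a; cases b <;> simp [mul_def, one_def]
  inv_mul_cancel a := by
    obtain ⟨g, b⟩ := a; cases b <;> simp [mul_def, one_def, inv_def]

instance [Fintype G] : Fintype (GenDihedral G) :=
  Fintype.ofEquiv (G × Bool)
    ⟨fun p => ⟨p.1, p.2⟩, fun x => (x.g, x.b), fun _ => rfl, fun _ => rfl⟩

instance [DecidableEq G] (a c : GenDihedral G) : Decidable (Commute a c) :=
  decidable_of_iff (a * c = c * a) Iff.rfl

end GenDihedral

namespace GenDihedral

/-- The commuting graph of `D(G)`: vertices are the elements of `D(G)`, and two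
distinct vertices are adjacent iff they commute. -/
def commGraph (G : Type) [CommGroup G] : SimpleGraph (GenDihedral G) where
  Adj u v := u ≠ v ∧ u * v = v * u
  symm := ⟨fun _ _ h => ⟨h.1.symm, h.2.symm⟩⟩
  loopless := ⟨fun _ h => h.1 rfl⟩

instance {G : Type} [CommGroup G] [DecidableEq G] : DecidableRel (commGraph G).Adj :=
  fun _ _ => instDecidableAnd

end GenDihedral

/-- `W` is a resolving set of `Γ` if every pair of distinct vertices is distinguished
by its vector of graph distances to the vertices of `W`. -/
def IsResolvingSet {V : Type} (Γ : SimpleGraph V) (W : Set V) : Prop :=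
  ∀ u v : V, u ≠ v → ∃ w ∈ W, Γ.dist u w ≠ Γ.dist v w

/-- The metric dimension of `Γ`: the minimum cardinality of a resolving set. -/
noncomputable def metricDim {V : Type} (Γ : SimpleGraph V) : ℕ :=
  sInf {k : ℕ | ∃ W : Finset V, IsResolvingSet Γ ↑W ∧ W.card = k}

/-- The number `sᵢ` of resolving sets of `Γ` of cardinality `i` (the coefficient of `xⁱ`
in the resolving polynomial `β(Γ, x) = Σᵢ sᵢ xⁱ`). -/
noncomputable def numResolvingSets {V : Type} (Γ : SimpleGraph V) (i : ℕ) : ℕ :=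
  Set.ncard {W : Finset V | IsResolvingSet Γ ↑W ∧ W.card = i}


namespace RS17
open Finset

lemma ncard_transversals {α β : Type} [Fintype α] [DecidableEq α] [DecidableEq β] (f : α → β) :
    Set.ncard {T : Finset α | (∀ x ∈ T, ∀ y ∈ T, f x = f y → x = y) ∧
        T.card = (univ.image f).card}
      = ∏ b ∈ univ.image f, (univ.filter fun a => f a = b).card := by
  classical
  have hmem : ∀ σ : (∀ b : ↥(univ.image f), {a : α // f a = ↑b}),
      (univ.image fun b : ↥(univ.image f) => (σ b : α)) ∈
        {T : Finset α | (∀ x ∈ T, ∀ y ∈ T, f x = f y → x = y) ∧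
          T.card = (univ.image f).card} := by
    intro σ
    constructor
    · intro x hx y hy hxy
      obtain ⟨b₁, _, rfl⟩ := mem_image.1 hx
      obtain ⟨b₂, _, rfl⟩ := mem_image.1 hy
      have hb : (b₁ : β) = b₂ := by rw [← (σ b₁).2, ← (σ b₂).2, hxy]
      rw [Subtype.ext hb]
    · rw [card_image_of_injective]
      · rw [card_univ, Fintype.card_coe]
      · intro b₁ b₂ h
        apply Subtype.ext
        rw [← (σ b₁).2, ← (σ b₂).2]
        exact congrArg f h
  have hbij : Function.Bijective
      (fun σ : (∀ b : ↥(univ.image f), {a : α // f a = ↑b}) =>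
        (⟨univ.image fun b : ↥(univ.image f) => (σ b : α), hmem σ⟩ :
          {T : Finset α // T ∈ {T : Finset α | (∀ x ∈ T, ∀ y ∈ T, f x = f y → x = y) ∧
            T.card = (univ.image f).card}})) := by
    constructor
    · intro σ τ h
      have hset : (univ.image fun b : ↥(univ.image f) => (σ b : α))
          = univ.image fun b : ↥(univ.image f) => (τ b : α) := congrArg Subtype.val h
      funext b
      have hmem2 : (σ b : α) ∈ univ.image fun b : ↥(univ.image f) => (τ b : α) :=
        hset ▸ mem_image_of_mem _ (mem_univ b)
      obtain ⟨b', _, hb'⟩ := mem_image.1 hmem2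
      have hbb : b' = b := Subtype.ext (by rw [← (τ b').2, hb', (σ b).2])
      exact Subtype.ext (by rw [← hb', hbb])
    · rintro ⟨T, hTinj, hTcard⟩
      have hfib : ∀ b ∈ univ.image f, (T.filter fun a => f a = b).card = 1 := by
        have hsum : ∑ b ∈ univ.image f, (T.filter fun a => f a = b).card = T.card :=
          (Finset.card_eq_sum_card_fiberwise (fun x _ => mem_image_of_mem f (mem_univ x))).symm
        have hle : ∀ b ∈ univ.image f, (T.filter fun a => f a = b).card ≤ 1 := by
          intro b _
          refine Finset.card_le_one.2 ?_
          intro x hx y hy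
          rw [mem_filter] at hx hy
          exact hTinj x hx.1 y hy.1 (hx.2.trans hy.2.symm)
        intro b hb
        by_contra hne
        have hlt : (T.filter fun a => f a = b).card < 1 := lt_of_le_of_ne (hle b hb) hne
        have hstrict : ∑ b ∈ univ.image f, (T.filter fun a => f a = b).card
            < ∑ _b ∈ univ.image f, 1 :=
          Finset.sum_lt_sum hle ⟨b, hb, hlt⟩
        rw [Finset.sum_const, smul_eq_mul, mul_one] at hstrict
        omega
      have hex : ∀ b : ↥(univ.image f), ∃ a : α, a ∈ T ∧ f a = ↑b := by
        intro b
        obtain ⟨a, ha⟩ := Finset.card_eq_one.1 (hfib _ b.2)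
        have ham : a ∈ T.filter fun a => f a = ↑b := ha ▸ mem_singleton_self a
        rw [mem_filter] at ham
        exact ⟨a, ham⟩
      choose σ hσT hσf using hex
      refine ⟨fun b => ⟨σ b, hσf b⟩, ?_⟩
      apply Subtype.ext
      dsimp only
      apply Finset.eq_of_subset_of_card_le
      · intro x hx
        obtain ⟨b, _, rfl⟩ := mem_image.1 hx
        exact hσT b
      · exact le_of_eq (hTcard.trans ((hmem fun b => ⟨σ b, hσf b⟩).2).symm)
  rw [← Nat.card_coe_set_eq, ← Nat.card_congr (Equiv.ofBijective _ hbij),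
    Nat.card_eq_fintype_card, Fintype.card_pi]
  rw [← Finset.prod_coe_sort (univ.image f) (fun b => (univ.filter fun a => f a = b).card)]
  exact Finset.prod_congr rfl fun b _ => Fintype.card_subtype _

end RS17

namespace RS17
open Finset GenDihedral

variable {G : Type} [CommGroup G] [DecidableEq G]

set_option linter.unusedSectionVars false in
lemma aux1 (a b : G) : a * b = b * a⁻¹ ↔ a ^ 2 = 1 := by
  rw [mul_comm b a⁻¹, mul_left_inj, eq_inv_iff_mul_eq_one, ← pow_two]

set_option linter.unusedSectionVars false in
lemma aux2 (a b : G) : a * b⁻¹ = b * a⁻¹ ↔ a ^ 2 = b ^ 2 := by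
  rw [← div_eq_mul_inv, ← div_eq_mul_inv, div_eq_div_iff_mul_eq_mul, ← pow_two, ← pow_two]

/-- The twin-class key of a vertex. -/
def key (v : GenDihedral G) : Bool × Option G :=
  ⟨v.b, if v.b then some (v.g ^ 2) else if v.g ^ 2 = 1 then some 1 else none⟩

/-- Commuting condition. -/
def acond (u v : GenDihedral G) : Prop :=
  cond u.b (cond v.b (u.g ^ 2 = v.g ^ 2) (v.g ^ 2 = 1)) (cond v.b (u.g ^ 2 = 1) True)

lemma mul_comm_iff (u v : GenDihedral G) : u * v = v * u ↔ acond u v := by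
  obtain ⟨a, b1⟩ := u; obtain ⟨b, b2⟩ := v
  cases b1 <;> cases b2 <;>
    simp only [GenDihedral.mul_def, acond, GenDihedral.mk.injEq, cond, Bool.xor_false,
      Bool.xor_true, Bool.false_xor, Bool.true_xor, and_true, iff_true, inv_inv,
      Bool.false_eq_true, Bool.true_eq_false, ite_true, ite_false, Bool.not_false, Bool.not_true]
  · exact mul_comm a b
  · exact aux1 a b
  · rw [eq_comm, aux1 b a]
  · rw [aux2 a b]

lemma adj_iff (u v : GenDihedral G) : (commGraph G).Adj u v ↔ u ≠ v ∧ acond u v := by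
  rw [show (commGraph G).Adj u v ↔ u ≠ v ∧ u * v = v * u from Iff.rfl, mul_comm_iff]

lemma adj_one {v : GenDihedral G} (h : v ≠ 1) : (commGraph G).Adj 1 v :=
  ⟨fun e => h e.symm, by rw [one_mul, mul_one]⟩

lemma dist_eq {u v : GenDihedral G} (h : u ≠ v) :
    (commGraph G).dist u v = if (commGraph G).Adj u v then 1 else 2 := by
  split_ifs with ha
  · exact SimpleGraph.dist_eq_one_iff_adj.2 ha
  · have hu1 : u ≠ 1 := by rintro rfl; exact ha (adj_one (Ne.symm h))
    have hv1 : v ≠ 1 := by rintro rfl; exact ha ((adj_one hu1).symm)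
    have h2 : (commGraph G).dist u v ≤ 2 := by
      refine le_trans
        (SimpleGraph.dist_le ((adj_one hu1).symm.toWalk.append (adj_one hv1).toWalk)) ?_
      simp [SimpleGraph.Walk.length_append]
    have h0 : (commGraph G).dist u v ≠ 0 :=
      SimpleGraph.dist_ne_zero_iff_ne_and_reachable.2
        ⟨h, ((adj_one hu1).symm.toWalk.append (adj_one hv1).toWalk).reachable⟩
    have h1 : (commGraph G).dist u v ≠ 1 := fun e => ha (SimpleGraph.dist_eq_one_iff_adj.1 e)
    omega

lemma key_eq_elim {u v : GenDihedral G} (h : key u = key v) :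
    u.b = v.b ∧ ((u.b = true ∧ u.g ^ 2 = v.g ^ 2) ∨
      (u.b = false ∧ (u.g ^ 2 = 1 ↔ v.g ^ 2 = 1))) := by
  obtain ⟨h1, h2⟩ := Prod.ext_iff.1 h
  dsimp only [key] at h1 h2
  refine ⟨h1, ?_⟩
  cases hb : u.b
  · right
    rw [hb] at h2; rw [← h1, hb] at h2
    simp only [Bool.false_eq_true, ite_false] at h2
    refine ⟨rfl, ?_⟩
    by_cases h3 : u.g ^ 2 = 1 <;> by_cases h4 : v.g ^ 2 = 1 <;> simp [h3, h4] at h2 ⊢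
  · left
    rw [hb] at h2; rw [← h1, hb] at h2
    simp only [ite_true, Option.some.injEq] at h2
    exact ⟨rfl, h2⟩

lemma acond_of_key_eq {u v : GenDihedral G} (h : key u = key v) : acond u v := by
  obtain ⟨h1, h2 | h2⟩ := key_eq_elim h
  · have hvb : v.b = true := h1 ▸ h2.1
    simp [acond, h2.1, hvb, h2.2]
  · have hvb : v.b = false := h1 ▸ h2.1
    simp [acond, h2.1, hvb]

lemma acond_congr {u v w : GenDihedral G} (h : key u = key v) : acond u w ↔ acond v w := by
  obtain ⟨h1, h2 | h2⟩ := key_eq_elim h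
  · have hvb : v.b = true := h1 ▸ h2.1
    cases hw : w.b <;> simp [acond, h2.1, hvb, hw, h2.2]
  · have hvb : v.b = false := h1 ▸ h2.1
    cases hw : w.b <;> simp [acond, h2.1, hvb, hw, h2.2]

lemma acond_symm {u v : GenDihedral G} : acond u v ↔ acond v u := by
  cases hu : u.b <;> cases hv : v.b <;> simp [acond, hu, hv, eq_comm]

lemma dist_congr {u v w : GenDihedral G} (h : key u = key v) (huv : u ≠ v)
    (hwu : w ≠ u) (hwv : w ≠ v) :
    (commGraph G).dist u w = (commGraph G).dist v w := by
  rw [dist_eq (Ne.symm hwu), dist_eq (Ne.symm hwv)]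
  have : (commGraph G).Adj u w ↔ (commGraph G).Adj v w := by
    rw [adj_iff, adj_iff]
    exact and_congr (by simp [Ne.symm hwu, Ne.symm hwv]) (acond_congr h)
  by_cases hadj : (commGraph G).Adj u w
  · rw [if_pos hadj, if_pos (this.1 hadj)]
  · rw [if_neg hadj, if_neg (fun hc => hadj (this.2 hc))]

variable [Fintype G]

lemma fiber_sq (a c : G) (hc : c ^ 2 = a) :
    (univ.filter fun g : G => g ^ 2 = a) =
      (univ.filter fun g : G => g ^ 2 = 1).image fun g => c * g := by
  ext x
  simp only [mem_filter, mem_univ, true_and, mem_image]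
  constructor
  · intro hx
    refine ⟨c⁻¹ * x, ?_, by group⟩
    rw [mul_pow, inv_pow, hc, hx, inv_mul_cancel]
  · rintro ⟨g, hg, rfl⟩
    rw [mul_pow, hc, hg, mul_one]

lemma card_fiber_sq {a : G} (ha : a ∈ univ.image fun g : G => g ^ 2) :
    (univ.filter fun g : G => g ^ 2 = a).card = (univ.filter fun g : G => g ^ 2 = 1).card := by
  obtain ⟨c, _, hc⟩ := mem_image.1 ha
  rw [fiber_sq a c hc, card_image_of_injective _ (mul_right_injective c)]

lemma card_sq_image :
    (univ.image fun g : G => g ^ 2).card * (univ.filter fun g : G => g ^ 2 = 1).card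
      = Fintype.card G := by
  have h := Finset.card_eq_sum_card_fiberwise
    (f := fun g : G => g ^ 2) (s := univ) (t := univ.image fun g : G => g ^ 2)
    (fun x hx => mem_image_of_mem _ hx)
  rw [Finset.card_univ] at h
  rw [h, Finset.sum_congr rfl (fun a ha => card_fiber_sq ha), Finset.sum_const, smul_eq_mul]

lemma fiber_key_refl (a : G) :
    (univ.filter fun v : GenDihedral G => key v = (true, some a)) =
      (univ.filter fun g : G => g ^ 2 = a).image fun g => (⟨g, true⟩ : GenDihedral G) := by
  ext v
  simp only [mem_filter, mem_univ, true_and, mem_image, key, Prod.mk.injEq]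
  constructor
  · rintro ⟨hb, hsq⟩
    rw [hb] at hsq
    simp only [ite_true, Option.some.injEq] at hsq
    exact ⟨v.g, hsq, by ext <;> simp [hb.symm]⟩
  · rintro ⟨g, hg, rfl⟩
    simp [hg]

lemma card_fiber_key_refl {a : G} (ha : a ∈ univ.image fun g : G => g ^ 2) :
    (univ.filter fun v : GenDihedral G => key v = (true, some a)).card
      = (univ.filter fun g : G => g ^ 2 = 1).card := by
  rw [fiber_key_refl, card_image_of_injective, card_fiber_sq ha]
  intro x y hxy
  simpa using congrArg GenDihedral.g hxy

lemma fiber_key_B :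
    (univ.filter fun v : GenDihedral G => key v = (false, some 1)) =
      (univ.filter fun g : G => g ^ 2 = 1).image fun g => (⟨g, false⟩ : GenDihedral G) := by
  ext v
  simp only [mem_filter, mem_univ, true_and, mem_image, key, Prod.mk.injEq]
  constructor
  · rintro ⟨hb, hsq⟩
    rw [hb] at hsq
    simp only [Bool.false_eq_true, ite_false] at hsq
    by_cases h1 : v.g ^ 2 = 1
    · exact ⟨v.g, h1, by ext <;> simp [hb.symm]⟩
    · simp [h1] at hsq
  · rintro ⟨g, hg, rfl⟩
    simp [hg]

lemma card_fiber_key_B :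
    (univ.filter fun v : GenDihedral G => key v = (false, some 1)).card
      = (univ.filter fun g : G => g ^ 2 = 1).card := by
  rw [fiber_key_B, card_image_of_injective]
  intro x y hxy
  simpa using congrArg GenDihedral.g hxy

lemma fiber_key_A :
    (univ.filter fun v : GenDihedral G => key v = (false, none)) =
      (univ.filter fun g : G => ¬ g ^ 2 = 1).image fun g => (⟨g, false⟩ : GenDihedral G) := by
  ext v
  simp only [mem_filter, mem_univ, true_and, mem_image, key, Prod.mk.injEq]
  constructor
  · rintro ⟨hb, hsq⟩
    rw [hb] at hsq
    simp only [Bool.false_eq_true, ite_false] at hsq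
    by_cases h1 : v.g ^ 2 = 1
    · simp [h1] at hsq
    · exact ⟨v.g, h1, by ext <;> simp [hb.symm]⟩
  · rintro ⟨g, hg, rfl⟩
    simp [hg]

lemma card_fiber_key_A :
    (univ.filter fun v : GenDihedral G => key v = (false, none)).card
      = Fintype.card G - (univ.filter fun g : G => g ^ 2 = 1).card := by
  rw [fiber_key_A, card_image_of_injective]
  · have := Finset.card_filter_add_card_filter_not
      (s := (univ : Finset G)) (p := fun g => g ^ 2 = 1)
    rw [Finset.card_univ] at this
    omega
  · intro x y hxy
    simpa using congrArg GenDihedral.g hxy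

lemma key_refl_elim {w : GenDihedral G} {a : G} (h : key w = (true, some a)) :
    w.b = true ∧ w.g ^ 2 = a := by
  obtain ⟨h1, h2⟩ := Prod.ext_iff.1 h
  dsimp only [key] at h1 h2
  rw [h1] at h2
  simp only [ite_true, Option.some.injEq] at h2
  exact ⟨h1, h2⟩

lemma exists_mem_of_two_le {W : Finset (GenDihedral G)}
    (hW : ∀ u v : GenDihedral G, u ∉ W → v ∉ W → key u = key v → u = v)
    {k : Bool × Option G}
    (h2 : 2 ≤ (univ.filter fun v : GenDihedral G => key v = k).card) :
    ∃ w ∈ W, key w = k := by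
  obtain ⟨x, hx, y, hy, hxy⟩ := Finset.one_lt_card.1 h2
  rw [mem_filter] at hx hy
  by_cases hxW : x ∈ W
  · exact ⟨x, hxW, hx.2⟩
  by_cases hyW : y ∈ W
  · exact ⟨y, hyW, hy.2⟩
  exact absurd (hW x y hxW hyW (hx.2.trans hy.2.symm)) hxy

lemma resolving_iff (hna : ∃ g : G, g ^ 2 ≠ 1)
    (hz2 : 2 ≤ (univ.filter fun g : G => g ^ 2 = 1).card)
    (W : Finset (GenDihedral G)) :
    IsResolvingSet (commGraph G) ↑W ↔
      ∀ u v : GenDihedral G, u ∉ W → v ∉ W → key u = key v → u = v := by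
  constructor
  · intro hres u v hu hv hk
    by_contra hne
    obtain ⟨w, hwW, hd⟩ := hres u v hne
    have hwu : w ≠ u := fun e => hu (e ▸ hwW)
    have hwv : w ≠ v := fun e => hv (e ▸ hwW)
    exact hd (dist_congr hk hne hwu hwv)
  · intro hW u v hne
    have hrefl : ∀ a : G, (a ∈ univ.image fun g : G => g ^ 2) →
        ∃ w ∈ W, key w = ((true, some a) : Bool × Option G) :=
      fun a ha => exists_mem_of_two_le hW (by rw [card_fiber_key_refl ha]; exact hz2)
    by_cases huW : u ∈ W
    · refine ⟨u, huW, ?_⟩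
      rw [SimpleGraph.dist_self, dist_eq (Ne.symm hne)]
      split_ifs <;> simp
    by_cases hvW : v ∈ W
    · refine ⟨v, hvW, ?_⟩
      rw [SimpleGraph.dist_self, dist_eq hne]
      split_ifs <;> simp
    have hkne : key u ≠ key v := fun e => hne (hW u v huW hvW e)
    have produce : ∀ w ∈ W, (acond u w ↔ ¬ acond v w) →
        ∃ w ∈ (↑W : Set (GenDihedral G)), (commGraph G).dist u w ≠ (commGraph G).dist v w := by
      intro w hwW hxor
      have hwu : w ≠ u := fun e => huW (e ▸ hwW)
      have hwv : w ≠ v := fun e => hvW (e ▸ hwW)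
      refine ⟨w, hwW, ?_⟩
      rw [dist_eq (Ne.symm hwu), dist_eq (Ne.symm hwv)]
      by_cases hc : acond u w
      · rw [if_pos ((adj_iff u w).2 ⟨Ne.symm hwu, hc⟩),
          if_neg (fun hc2 => (hxor.1 hc) ((adj_iff v w).1 hc2).2)]
        omega
      · have hvw : acond v w := by by_contra h3; exact hc (hxor.2 h3)
        rw [if_neg (fun hc2 => hc ((adj_iff u w).1 hc2).2),
          if_pos ((adj_iff v w).2 ⟨Ne.symm hwv, hvw⟩)]
        omega
    have main2 : ∀ u' v' : GenDihedral G, u' ∉ W → v' ∉ W → key u' ≠ key v' →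
        (u'.b = false ∨ v'.b = true) → ∃ w ∈ W, (acond u' w ↔ ¬ acond v' w) := by
      clear hkne huW hvW hne
      intro u v huW hvW hk hbc
      cases hub : u.b
      · cases hvb : v.b
        · -- both rotations
          obtain ⟨w, hwW, hwk⟩ := hrefl 1 (mem_image.2 ⟨1, mem_univ _, one_pow 2⟩)
          obtain ⟨hwb, hwa⟩ := key_refl_elim hwk
          have hx : ¬ (u.g ^ 2 = 1 ↔ v.g ^ 2 = 1) := by
            intro hiff
            apply hk
            simp only [key, hub, hvb, Bool.false_eq_true, if_false, Prod.mk.injEq, true_and]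
            by_cases h1 : u.g ^ 2 = 1
            · rw [if_pos h1, if_pos (hiff.1 h1)]
            · rw [if_neg h1, if_neg (fun h2 => h1 (hiff.2 h2))]
          refine ⟨w, hwW, ?_⟩
          simp only [acond, hub, hvb, hwb, cond, hwa]
          tauto
        · -- u rotation, v reflection
          by_cases h1 : u.g ^ 2 = 1
          · have hbb : ∃ b : G, ((b ∈ univ.image fun g : G => g ^ 2) ∧ b ≠ v.g ^ 2) := by
              by_cases hva : v.g ^ 2 = 1
              · obtain ⟨g0, hg0⟩ := hna
                exact ⟨g0 ^ 2, mem_image.2 ⟨g0, mem_univ _, rfl⟩, by rw [hva]; exact hg0⟩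
              · exact ⟨1, mem_image.2 ⟨1, mem_univ _, one_pow 2⟩, fun e => hva e.symm⟩
            obtain ⟨b, hbsq, hbne⟩ := hbb
            obtain ⟨w, hwW, hwk⟩ := hrefl b hbsq
            obtain ⟨hwb, hwa⟩ := key_refl_elim hwk
            refine ⟨w, hwW, ?_⟩
            simp only [acond, hub, hvb, hwb, cond, hwa]
            simp only [h1, true_iff]
            exact fun e => hbne e.symm
          · obtain ⟨w, hwW, hwk⟩ := hrefl (v.g ^ 2) (mem_image.2 ⟨v.g, mem_univ _, rfl⟩)
            obtain ⟨hwb, hwa⟩ := key_refl_elim hwk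
            refine ⟨w, hwW, ?_⟩
            simp only [acond, hub, hvb, hwb, cond, hwa]
            simp [h1]
      · cases hvb : v.b
        · exact absurd hbc (by simp [hub, hvb])
        · -- both reflections
          have ha : u.g ^ 2 ≠ v.g ^ 2 := by
            intro he
            apply hk
            simp only [key, hub, hvb, ite_true, he]
          obtain ⟨w, hwW, hwk⟩ := hrefl (u.g ^ 2) (mem_image.2 ⟨u.g, mem_univ _, rfl⟩)
          obtain ⟨hwb, hwa⟩ := key_refl_elim hwk
          refine ⟨w, hwW, ?_⟩
          simp only [acond, hub, hvb, hwb, cond, hwa]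
          constructor
          · exact fun _ h2 => ha h2.symm
          · exact fun _ => trivial
    by_cases hcase : u.b = false ∨ v.b = true
    · obtain ⟨w, hwW, hx⟩ := main2 u v huW hvW hkne hcase
      exact produce w hwW hx
    · push_neg at hcase
      obtain ⟨w, hwW, hx⟩ := main2 v u hvW huW (Ne.symm hkne)
        (Or.inl (by simpa using hcase.2))
      exact produce w hwW (by tauto)

end RS17

namespace RS17
open Finset GenDihedral

variable {G : Type} [CommGroup G] [DecidableEq G] [Fintype G]

lemma key_image (hna : ∃ g : G, g ^ 2 ≠ 1) :
    (univ.image (key (G := G))) =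
      insert ((false : Bool), (none : Option G)) (insert ((false : Bool), some (1 : G))
        ((univ.image fun g : G => g ^ 2).image fun a => ((true, some a) : Bool × Option G))) := by
  ext k
  simp only [mem_image, mem_insert, mem_univ, true_and]
  constructor
  · rintro ⟨v, rfl⟩
    cases hb : v.b
    · by_cases h1 : v.g ^ 2 = 1
      · right; left
        simp [key, hb, h1]
      · left
        simp [key, hb, h1]
    · right; right
      exact ⟨v.g ^ 2, ⟨v.g, rfl⟩, by simp [key, hb]⟩
  · rintro (rfl | rfl | ⟨a, ⟨c, rfl⟩, rfl⟩)
    · obtain ⟨g0, hg0⟩ := hna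
      exact ⟨⟨g0, false⟩, by simp [key, hg0]⟩
    · exact ⟨⟨1, false⟩, by simp [key]⟩
    · exact ⟨⟨c, true⟩, by simp [key]⟩

lemma card_key_image (hna : ∃ g : G, g ^ 2 ≠ 1) :
    (univ.image (key (G := G))).card = (univ.image fun g : G => g ^ 2).card + 2 := by
  rw [key_image hna, card_insert_of_notMem, card_insert_of_notMem,
    card_image_of_injective]
  · intro a₁ a₂ h
    simpa using h
  · simp
  · simp

lemma prod_fibers (hna : ∃ g : G, g ^ 2 ≠ 1) :
    ∏ b ∈ univ.image (key (G := G)),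
        (univ.filter fun v : GenDihedral G => key v = b).card
      = (Fintype.card G - (univ.filter fun g : G => g ^ 2 = 1).card) *
        (univ.filter fun g : G => g ^ 2 = 1).card ^
          ((univ.image fun g : G => g ^ 2).card + 1) := by
  rw [key_image hna, prod_insert (by simp), prod_insert (by simp), prod_image
    (fun a₁ _ a₂ _ h => by simpa using h)]
  rw [card_fiber_key_A, card_fiber_key_B,
    Finset.prod_congr rfl (fun a ha => card_fiber_key_refl ha), prod_const]
  ring

end RS17

open GenDihedral Finset RS17 in
theorem stmt17' {G : Type} [CommGroup G] [Fintype G] [DecidableEq G]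
    (hna : ∃ g : G, g ^ 2 ≠ 1) (n z : ℕ) (hn : n = Fintype.card G)
    (hz : z = (Finset.univ.filter fun g : G => g ^ 2 = 1).card) (hz2 : 2 ≤ z) :
    numResolvingSets (commGraph G) (2 * n - n / z - 2) = (n - z) * z ^ (n / z + 1) := by
  classical
  have hz2' : 2 ≤ (univ.filter fun g : G => g ^ 2 = 1).card := by rw [← hz]; exact hz2
  set K := (univ.image fun g : G => g ^ 2).card with hKdef
  have hKz : K * z = n := by rw [hz, hn]; exact RS17.card_sq_image
  have hK2 : 2 ≤ K := by
    obtain ⟨g0, hg0⟩ := hna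
    refine Finset.one_lt_card.2
      ⟨1, mem_image.2 ⟨1, mem_univ _, one_pow 2⟩,
       g0 ^ 2, mem_image.2 ⟨g0, mem_univ _, rfl⟩, fun e => hg0 e.symm⟩
  have hn4 : 4 ≤ n := by
    calc (4 : ℕ) = 2 * 2 := rfl
    _ ≤ K * z := Nat.mul_le_mul hK2 hz2
    _ = n := hKz
  have hKn : K ≤ n := by
    calc K = K * 1 := (mul_one K).symm
    _ ≤ K * z := Nat.mul_le_mul_left K (by omega)
    _ = n := hKz
  have hdz : n / z = K := by rw [← hKz, Nat.mul_div_cancel _ (by omega : 0 < z)]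
  have hcV : Fintype.card (GenDihedral G) = 2 * n := by
    rw [hn, Fintype.card_congr
      (⟨fun x : GenDihedral G => (x.g, x.b), fun p => ⟨p.1, p.2⟩,
        fun _ => rfl, fun _ => rfl⟩ : GenDihedral G ≃ G × Bool)]
    simp [Fintype.card_prod, mul_comm]
  have hcardI : (univ.image (key (G := G))).card = K + 2 := card_key_image hna
  rw [numResolvingSets]
  have hset : {W : Finset (GenDihedral G) |
        IsResolvingSet (commGraph G) ↑W ∧ W.card = 2 * n - n / z - 2}
      = (fun T : Finset (GenDihedral G) => Tᶜ) '' {T : Finset (GenDihedral G) |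
          (∀ x ∈ T, ∀ y ∈ T, key x = key y → x = y) ∧
          T.card = (univ.image (key (G := G))).card} := by
    ext W
    simp only [Set.mem_image, Set.mem_setOf_eq]
    constructor
    · rintro ⟨hres, hcard⟩
      refine ⟨Wᶜ, ⟨?_, ?_⟩, compl_compl W⟩
      · intro x hx y hy hk
        exact (resolving_iff hna hz2' W).1 hres x y (mem_compl.1 hx) (mem_compl.1 hy) hk
      · rw [card_compl, hcV, hcard, hcardI]
        omega
    · rintro ⟨T, ⟨hinj, hcard⟩, rfl⟩
      constructor
      · rw [resolving_iff hna hz2']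
        intro u v hu hv hk
        have hu' : u ∈ T := by by_contra h; exact hu (mem_compl.2 h)
        have hv' : v ∈ T := by by_contra h; exact hv (mem_compl.2 h)
        exact hinj u hu' v hv' hk
      · rw [card_compl, hcV, hcard, hcardI]
        omega
  rw [hset, Set.ncard_image_of_injective _
    (Function.Involutive.injective (fun T : Finset (GenDihedral G) => compl_compl T))]
  rw [ncard_transversals (RS17.key (G := G)), prod_fibers hna, ← hz, ← hn, hdz, ← hKdef]

open GenDihedral in
/-- If `z = |{g : g² = e}| ≥ 2`, the number of resolving sets of the commuting graph of
a non-abelian `D(G)` of minimum cardinality `2n - n/z - 2` equals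
`(n - z) · z^{n/z + 1}`, where `n = |G|`. -/
theorem stmt17 {G : Type} [CommGroup G] [Fintype G] [DecidableEq G]
    (hna : ∃ g : G, g ^ 2 ≠ 1) (n z : ℕ) (hn : n = Fintype.card G)
    (hz : z = (Finset.univ.filter fun g : G => g ^ 2 = 1).card) (hz2 : 2 ≤ z) :
    numResolvingSets (commGraph G) (2 * n - n / z - 2) = (n - z) * z ^ (n / z + 1) := by
  exact stmt17' hna n z hn hz hz2
end

section
/- Let G be a finite abelian group of order n, D(G) its generalized dihedral group (assumed non-abelian), \Gamma the commuting graph of D(G), and z = |{g \in G : g^2 = e}| with z \ge 2. For every integer i with 2n - n/z - 1 \le i \le 2n - 2, the number s_i of resolving sets of \Gamma of cardinality i equals z^{2n-i} · C(n/z + 1, 2n - i) + (n - z) · z^{2n-i-1} · C(n/z + 1, 2n - i - 1), where C(a, b) denotes a binomial coefficient. -/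
namespace GenDihedral

open Finset

variable {G : Type} [CommGroup G]

private lemma alg1 (a b : G) : a * b = b * a⁻¹ ↔ a ^ 2 = 1 := by
  rw [mul_comm a b]
  constructor
  · intro h
    have h2 := mul_left_cancel h
    rw [pow_two]
    nth_rewrite 2 [h2]
    exact mul_inv_cancel a
  · intro h
    have h2 : a = a⁻¹ := eq_inv_of_mul_eq_one_left (by rw [← pow_two, h])
    conv_lhs => rw [h2]

private lemma alg2 (a b : G) : a * b⁻¹ = b * a⁻¹ ↔ a ^ 2 = b ^ 2 := by
  rw [← div_eq_mul_inv, ← div_eq_mul_inv, div_eq_div_iff_mul_eq_mul, ← pow_two, ← pow_two]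

lemma commute_ff (a b : G) :
    (⟨a, false⟩ : GenDihedral G) * ⟨b, false⟩ = ⟨b, false⟩ * ⟨a, false⟩ := by
  simp [mul_def, mul_comm]

lemma commute_ft (a b : G) :
    (⟨a, false⟩ : GenDihedral G) * ⟨b, true⟩ = ⟨b, true⟩ * ⟨a, false⟩ ↔ a ^ 2 = 1 := by
  simp only [mul_def, mk.injEq]
  simp only [Bool.false_eq_true, if_false, if_true, Bool.xor_false, Bool.false_xor, and_true]
  exact alg1 a b

lemma commute_tf (a b : G) :
    (⟨a, true⟩ : GenDihedral G) * ⟨b, false⟩ = ⟨b, false⟩ * ⟨a, true⟩ ↔ b ^ 2 = 1 := by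
  rw [eq_comm, commute_ft]

lemma commute_tt (a b : G) :
    (⟨a, true⟩ : GenDihedral G) * ⟨b, true⟩ = ⟨b, true⟩ * ⟨a, true⟩ ↔ a ^ 2 = b ^ 2 := by
  simp only [mul_def, mk.injEq]
  simp only [if_true, and_true]
  exact alg2 a b

end GenDihedral

namespace GenDihedral

open Finset

variable {G : Type} [CommGroup G] [DecidableEq G]

/-- The "distance code" in the commuting graph. -/
def D (u v : GenDihedral G) : ℕ :=
  if u = v then 0 else if u * v = v * u then 1 else 2

lemma adj_one {x : GenDihedral G} (hx : x ≠ 1) : (commGraph G).Adj x 1 :=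
  ⟨hx, by rw [mul_one, one_mul]⟩

lemma dist_eq (u v : GenDihedral G) : (commGraph G).dist u v = D u v := by
  unfold D
  by_cases huv : u = v
  · subst huv
    simp [SimpleGraph.dist_self]
  · rw [if_neg huv]
    by_cases hc : u * v = v * u
    · rw [if_pos hc]
      exact SimpleGraph.dist_eq_one_iff_adj.mpr ⟨huv, hc⟩
    · rw [if_neg hc]
      have hu : u ≠ 1 := fun h => hc (by subst h; rw [one_mul, mul_one])
      have hv : v ≠ 1 := fun h => hc (by subst h; rw [one_mul, mul_one])
      let hw : (commGraph G).Walk u v :=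
        SimpleGraph.Walk.cons (adj_one hu) (SimpleGraph.Walk.cons ((adj_one hv).symm)
          SimpleGraph.Walk.nil)
      have hle : (commGraph G).dist u v ≤ 2 := SimpleGraph.dist_le hw
      have h0 : (commGraph G).dist u v ≠ 0 := by
        intro h
        rcases SimpleGraph.dist_eq_zero_iff_eq_or_not_reachable.mp h with h' | h'
        · exact huv h'
        · exact h' ⟨hw⟩
      have h1 : (commGraph G).dist u v ≠ 1 := by
        intro h
        exact hc (SimpleGraph.dist_eq_one_iff_adj.mp h).2
      omega

end GenDihedral
namespace GenDihedral

open Finset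

variable {G : Type} [CommGroup G] [DecidableEq G]

/-- Twin-class label. -/
def key (c : G) (x : GenDihedral G) : Bool × G :=
  (x.b, if x.b then x.g ^ 2 else if x.g ^ 2 = 1 then 1 else c)

lemma key_commute {c : G} (hc : c ^ 2 ≠ 1) {u v : GenDihedral G} (h : key c u = key c v)
    (w : GenDihedral G) : (u * w = w * u) ↔ (v * w = w * v) := by
  obtain ⟨a, ba⟩ := u; obtain ⟨b, bb⟩ := v; obtain ⟨d, bd⟩ := w
  have hc1 : c ≠ 1 := fun h' => hc (by rw [h', one_pow])
  unfold key at h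
  simp only [Prod.mk.injEq] at h
  obtain ⟨hb, hsnd⟩ := h
  subst hb
  cases ba
  · simp only [if_neg (by simp : ¬(false = true))] at hsnd
    cases bd
    · exact iff_of_true (commute_ff a d) (commute_ff b d)
    · rw [commute_ft, commute_ft]
      by_cases ha : a ^ 2 = 1 <;> by_cases hb2 : b ^ 2 = 1
      · exact iff_of_true ha hb2
      · rw [if_pos ha, if_neg hb2] at hsnd; exact absurd hsnd.symm hc1
      · rw [if_neg ha, if_pos hb2] at hsnd; exact absurd hsnd hc1
      · exact iff_of_false ha hb2
  · simp only [if_true] at hsnd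
    cases bd
    · rw [commute_tf, commute_tf]
    · rw [commute_tt, commute_tt, hsnd]

lemma D_ne {u v w : GenDihedral G} (hwu : w ≠ u) (hwv : w ≠ v)
    (h : ¬((u * w = w * u) ↔ (v * w = w * v))) : D u w ≠ D v w := by
  unfold D
  rw [if_neg (show ¬(u = w) from fun h' => hwu h'.symm),
    if_neg (show ¬(v = w) from fun h' => hwv h'.symm)]
  split_ifs <;> first | omega | tauto

variable [Fintype G]

lemma resolving_iff {c t : G} (hc : c ^ 2 ≠ 1) (ht : t ^ 2 = 1) (ht1 : t ≠ 1)
    (W : Finset (GenDihedral G)) :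
    IsResolvingSet (commGraph G) ↑W ↔
      ∀ u v : GenDihedral G, u ≠ v → key c u = key c v → u ∈ W ∨ v ∈ W := by
  constructor
  · intro hres u v huv hkey
    obtain ⟨w, hwW, hw⟩ := hres u v huv
    rw [Finset.mem_coe] at hwW
    by_cases hwu : w = u
    · exact Or.inl (hwu ▸ hwW)
    by_cases hwv : w = v
    · exact Or.inr (hwv ▸ hwW)
    exfalso
    apply hw
    rw [dist_eq, dist_eq]
    unfold D
    rw [if_neg (show ¬(u = w) from fun h' => hwu h'.symm),
      if_neg (show ¬(v = w) from fun h' => hwv h'.symm)]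
    have hiff := key_commute hc hkey w
    by_cases hcw : u * w = w * u
    · rw [if_pos hcw, if_pos (hiff.mp hcw)]
    · rw [if_neg hcw, if_neg (fun h' => hcw (hiff.mpr h'))]
  · intro hhit u v huv
    -- if u or v in W, easy
    by_cases huW : u ∈ W
    · refine ⟨u, Finset.mem_coe.mpr huW, ?_⟩
      rw [dist_eq, dist_eq]
      unfold D
      rw [if_pos rfl, if_neg (fun h' => huv h'.symm)]
      split_ifs <;> omega
    by_cases hvW : v ∈ W
    · refine ⟨v, Finset.mem_coe.mpr hvW, ?_⟩
      rw [dist_eq, dist_eq]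
      unfold D
      rw [if_pos rfl, if_neg huv]
      split_ifs <;> omega
    -- key facts
    have hc1 : c ≠ 1 := fun h' => hc (by rw [h', one_pow])
    have hcinv : (c⁻¹) ^ 2 ≠ 1 := fun h' => hc (by
      rw [inv_pow] at h'
      rw [← inv_inv (c ^ 2), h', inv_one])
    have hA : ∃ w ∈ W, w.b = false ∧ w.g ^ 2 ≠ 1 := by
      have hne : (⟨c, false⟩ : GenDihedral G) ≠ ⟨c⁻¹, false⟩ := by
        intro h'
        rw [mk.injEq] at h'
        apply hc
        rw [pow_two]
        nth_rewrite 2 [h'.1]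
        exact mul_inv_cancel c
      have hkey : key c (⟨c, false⟩ : GenDihedral G) = key c ⟨c⁻¹, false⟩ := by
        unfold key
        simp only [if_neg (by simp : ¬(false = true)), if_neg hc, if_neg hcinv]
      rcases hhit _ _ hne hkey with h' | h'
      · exact ⟨_, h', rfl, hc⟩
      · exact ⟨_, h', rfl, hcinv⟩
    have hB : ∃ w ∈ W, w.b = true ∧ w.g ^ 2 = 1 := by
      have hne : (⟨1, true⟩ : GenDihedral G) ≠ ⟨t, true⟩ := by
        intro h'
        rw [mk.injEq] at h'
        exact ht1 h'.1.symm
      have hkey : key c (⟨1, true⟩ : GenDihedral G) = key c ⟨t, true⟩ := by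
        unfold key
        simp only [if_pos rfl, one_pow, ht]
      rcases hhit _ _ hne hkey with h' | h'
      · exact ⟨_, h', rfl, one_pow 2⟩
      · exact ⟨_, h', rfl, ht⟩
    -- now the case analysis
    obtain ⟨a, ba⟩ := u
    obtain ⟨b, bb⟩ := v
    cases ba <;> cases bb
    · -- both rotations: use reflection from hB
      obtain ⟨w, hwW, hwb, hwg⟩ := hB
      obtain ⟨wg, wb⟩ := w
      simp only at hwb hwg
      subst hwb
      refine ⟨_, Finset.mem_coe.mpr hwW, ?_⟩
      rw [dist_eq, dist_eq]
      apply D_ne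
      · intro h'; exact huW (h' ▸ hwW)
      · intro h'; exact hvW (h' ▸ hwW)
      · rw [commute_ft, commute_ft]
        intro hiff
        have hkey : key c (⟨a, false⟩ : GenDihedral G) = key c ⟨b, false⟩ := by
          unfold key
          simp only [if_neg (by simp : ¬(false = true)), Prod.mk.injEq, true_and]
          by_cases ha : a ^ 2 = 1
          · rw [if_pos ha, if_pos (hiff.mp ha)]
          · rw [if_neg ha, if_neg (fun hb2 => ha (hiff.mpr hb2))]
        rcases hhit _ _ huv hkey with h' | h'
        · exact absurd h' huW
        · exact absurd h' hvW
    · -- u rotation, v reflection: use non-central rotation from hA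
      obtain ⟨w, hwW, hwb, hwg⟩ := hA
      obtain ⟨wg, wb⟩ := w
      simp only at hwb hwg
      subst hwb
      refine ⟨_, Finset.mem_coe.mpr hwW, ?_⟩
      rw [dist_eq, dist_eq]
      apply D_ne
      · intro h'; exact huW (h' ▸ hwW)
      · intro h'; exact hvW (h' ▸ hwW)
      · rw [commute_tf]
        intro hiff
        exact hwg (hiff.mp (commute_ff a wg))
    · -- u reflection, v rotation
      obtain ⟨w, hwW, hwb, hwg⟩ := hA
      obtain ⟨wg, wb⟩ := w
      simp only at hwb hwg
      subst hwb
      refine ⟨_, Finset.mem_coe.mpr hwW, ?_⟩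
      rw [dist_eq, dist_eq]
      apply D_ne
      · intro h'; exact huW (h' ▸ hwW)
      · intro h'; exact hvW (h' ▸ hwW)
      · rw [commute_tf]
        intro hiff
        exact hwg (hiff.mpr (commute_ff b wg))
    · -- both reflections: a² ≠ b²
      have hab : a ^ 2 ≠ b ^ 2 := by
        intro h'
        have : key c (⟨a, true⟩ : GenDihedral G) = key c ⟨b, true⟩ := by
          unfold key
          simp only [if_pos rfl, h']
        rcases hhit _ _ huv this with h'' | h''
        · exact absurd h'' huW
        · exact absurd h'' hvW
      have hw0 : (⟨a * t, true⟩ : GenDihedral G) ∈ W := by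
        have hne : (⟨a, true⟩ : GenDihedral G) ≠ ⟨a * t, true⟩ := by
          intro h'
          rw [mk.injEq] at h'
          exact ht1 (by
            have := h'.1
            nth_rewrite 1 [← mul_one a] at this
            exact (mul_left_cancel this).symm)
        have hkey : key c (⟨a, true⟩ : GenDihedral G) = key c ⟨a * t, true⟩ := by
          unfold key
          simp only [if_pos rfl, mul_pow, ht, mul_one]
        rcases hhit _ _ hne hkey with h' | h'
        · exact absurd h' huW
        · exact h'
      refine ⟨_, Finset.mem_coe.mpr hw0, ?_⟩
      rw [dist_eq, dist_eq]
      apply D_ne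
      · intro h'; exact huW (h' ▸ hw0)
      · intro h'; exact hvW (h' ▸ hw0)
      · rw [commute_tt, commute_tt]
        rw [mul_pow, ht, mul_one]
        intro hiff
        exact hab (hiff.mp rfl).symm
  
end GenDihedral

open Finset

variable {V K : Type} [Fintype V] [DecidableEq V] [DecidableEq K]

lemma card_injOn_image_eq (f : V → K) (S : Finset K) :
    ((univ : Finset (Finset V)).filter fun F =>
        (∀ u ∈ F, ∀ v ∈ F, f u = f v → u = v) ∧ F.image f = S).card
      = ∏ s ∈ S, (univ.filter fun v => f v = s).card := by
  classical
  rw [← Finset.card_pi]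
  have huniq : ∀ F ∈ (univ : Finset (Finset V)).filter (fun F =>
      (∀ u ∈ F, ∀ v ∈ F, f u = f v → u = v) ∧ F.image f = S),
      ∀ s ∈ S, ∃! v, v ∈ F ∧ f v = s := by
    intro F hF s hs
    rw [mem_filter] at hF
    obtain ⟨-, hinj, him⟩ := hF
    rw [← him, mem_image] at hs
    obtain ⟨v, hv, hfv⟩ := hs
    exact ⟨v, ⟨hv, hfv⟩, fun w ⟨hw, hfw⟩ => hinj w hw v hv (hfw.trans hfv.symm)⟩
  have hj : ∀ σ ∈ S.pi (fun s => univ.filter fun v => f v = s),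
      (S.attach.image fun s => σ s.1 s.2) ∈ (univ : Finset (Finset V)).filter (fun F =>
      (∀ u ∈ F, ∀ v ∈ F, f u = f v → u = v) ∧ F.image f = S) := by
    intro σ hσ
    rw [Finset.mem_pi] at hσ
    simp only [mem_filter, mem_univ, true_and]
    have hmem : ∀ (s : {x // x ∈ S}), f (σ s.1 s.2) = s.1 := by
      intro s
      have := hσ s.1 s.2
      simp only [mem_filter, mem_univ, true_and] at this
      exact this
    refine ⟨?_, ?_⟩
    · intro u hu v hv hfe
      simp only [mem_image, mem_attach, true_and, Subtype.exists] at hu hv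
      obtain ⟨s, hs, rfl⟩ := hu
      obtain ⟨t, ht, rfl⟩ := hv
      rw [hmem ⟨s, hs⟩, hmem ⟨t, ht⟩] at hfe
      subst hfe; rfl
    · ext t
      constructor
      · intro ht
        rw [mem_image] at ht
        obtain ⟨a, ha, rfl⟩ := ht
        rw [mem_image] at ha
        obtain ⟨s, -, rfl⟩ := ha
        rw [hmem s]; exact s.2
      · intro ht
        rw [mem_image]
        refine ⟨σ t ht, ?_, hmem ⟨t, ht⟩⟩
        rw [mem_image]
        exact ⟨⟨t, ht⟩, mem_attach _ _, rfl⟩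
  refine Finset.card_bij'
    (fun F hF => fun s hs => Finset.choose _ F (huniq F hF s hs))
    (fun σ _ => S.attach.image fun s => σ s.1 s.2) ?_ hj ?_ ?_
  · -- hi : i F ∈ pi
    intro F hF
    rw [Finset.mem_pi]
    intro s hs
    simp only [mem_filter, mem_univ, true_and]
    exact Finset.choose_property _ _ (huniq F hF s hs)
  · -- left inverse : j (i F) = F
    intro F hF
    have hF' := hF
    rw [mem_filter] at hF'
    obtain ⟨-, hinj, him⟩ := hF'
    ext v
    simp only [mem_image, mem_attach, true_and, Subtype.exists]
    constructor
    · rintro ⟨s, hs, rfl⟩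
      exact Finset.choose_mem _ _ (huniq F hF s hs)
    · intro hv
      have hfv : f v ∈ S := him ▸ Finset.mem_image_of_mem f hv
      refine ⟨f v, hfv, ?_⟩
      exact ((huniq F hF (f v) hfv).unique (Finset.choose_spec _ _ _) ⟨hv, rfl⟩)
  · -- right inverse
    intro σ hσ
    funext s hs
    apply ((huniq _ (hj σ hσ) s hs).unique (Finset.choose_spec _ _ _))
    rw [Finset.mem_pi] at hσ
    have := hσ s hs
    simp only [mem_filter, mem_univ, true_and] at this
    refine ⟨?_, this⟩
    simp only [mem_image, mem_attach, true_and, Subtype.exists]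
    exact ⟨s, hs, rfl⟩

lemma card_injOn_eq (f : V → K) (k : ℕ) :
    ((univ : Finset (Finset V)).filter fun F =>
        F.card = k ∧ ∀ u ∈ F, ∀ v ∈ F, f u = f v → u = v).card
      = ∑ S ∈ (univ.image f).powersetCard k, ∏ s ∈ S, (univ.filter fun v => f v = s).card := by
  classical
  rw [Finset.card_eq_sum_card_fiberwise (f := fun F => F.image f)
    (t := (univ.image f).powersetCard k)]
  · refine Finset.sum_congr rfl fun S hS => ?_
    rw [← card_injOn_image_eq f S]
    congr 1
    ext F
    simp only [mem_filter, mem_univ, true_and]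
    rw [Finset.mem_powersetCard] at hS
    constructor
    · rintro ⟨⟨hcard, hinj⟩, him⟩
      exact ⟨hinj, him⟩
    · rintro ⟨hinj, him⟩
      refine ⟨⟨?_, hinj⟩, him⟩
      rw [← hS.2, ← him]
      exact (Finset.card_image_of_injOn fun u hu v hv => hinj u hu v hv).symm
  · intro F hF
    simp only [Finset.mem_coe] at hF ⊢
    rw [mem_filter] at hF
    rw [Finset.mem_powersetCard]
    refine ⟨fun s hs => ?_, ?_⟩
    · rw [mem_image] at hs ⊢
      obtain ⟨v, hv, rfl⟩ := hs
      exact ⟨v, mem_univ v, rfl⟩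
    · rw [Finset.card_image_of_injOn fun u hu v hv => hF.2.2 u hu v hv, hF.2.1]
open Finset

lemma sum_powersetCard_insert_split {K : Type} [DecidableEq K] {a : K} {T : Finset K}
    (ha : a ∉ T) (k z : ℕ) (w : K → ℕ) (hw : ∀ s ∈ T, w s = z) :
    ∑ S ∈ (insert a T).powersetCard (k + 1), ∏ s ∈ S, w s
      = z ^ (k + 1) * T.card.choose (k + 1) + w a * z ^ k * T.card.choose k := by
  rw [Finset.powersetCard_succ_insert ha, Finset.sum_union]
  · congr 1
    · rw [Finset.sum_congr rfl (fun S hS => ?_), Finset.sum_const, Finset.card_powersetCard,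
        smul_eq_mul, mul_comm]
      rw [Finset.mem_powersetCard] at hS
      calc ∏ s ∈ S, w s = ∏ _s ∈ S, z := Finset.prod_congr rfl fun s hs => hw s (hS.1 hs)
        _ = z ^ (k + 1) := by rw [Finset.prod_const, hS.2]
    · rw [Finset.sum_image (fun S hS S' hS' h => ?_)]
      · rw [Finset.sum_congr rfl (fun S hS => ?_), Finset.sum_const, Finset.card_powersetCard,
          smul_eq_mul, mul_comm]
        rw [Finset.mem_powersetCard] at hS
        have haS : a ∉ S := fun h => ha (hS.1 h)
        rw [Finset.prod_insert haS]
        calc w a * ∏ s ∈ S, w s = w a * ∏ _s ∈ S, z :=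
              by rw [Finset.prod_congr rfl fun s hs => hw s (hS.1 hs)]
          _ = w a * z ^ k := by rw [Finset.prod_const, hS.2]
      · simp only [Finset.mem_coe] at hS hS'
        rw [Finset.mem_powersetCard] at hS hS'
        have haS : a ∉ S := fun h' => ha (hS.1 h')
        have haS' : a ∉ S' := fun h' => ha (hS'.1 h')
        rw [← Finset.erase_insert haS, ← Finset.erase_insert haS', h]
  · rw [Finset.disjoint_left]
    intro S hS hS'
    rw [Finset.mem_powersetCard] at hS
    rw [Finset.mem_image] at hS'
    obtain ⟨S', -, rfl⟩ := hS'
    exact ha (hS.1 (Finset.mem_insert_self a S'))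

namespace GenDihedral

open Finset

variable {G : Type} [CommGroup G] [Fintype G] [DecidableEq G]

lemma key_false (c : G) (g : G) :
    key c (⟨g, false⟩ : GenDihedral G) = (false, if g ^ 2 = 1 then 1 else c) := rfl

lemma key_true (c : G) (g : G) :
    key c (⟨g, true⟩ : GenDihedral G) = (true, g ^ 2) := rfl

lemma fiber_Z {c : G} (hc : c ^ 2 ≠ 1) :
    ((univ : Finset (GenDihedral G)).filter fun v => key c v = (false, (1 : G))).card
      = ((univ : Finset G).filter fun g => g ^ 2 = 1).card := by
  have hc1 : c ≠ 1 := fun h' => hc (by rw [h', one_pow])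
  refine Finset.card_bij' (fun v _ => v.g) (fun g _ => ⟨g, false⟩) ?_ ?_ ?_ ?_
  · intro v hv
    rw [mem_filter] at hv
    obtain ⟨-, hv⟩ := hv
    unfold key at hv
    rw [Prod.mk.injEq] at hv
    rw [mem_filter]
    refine ⟨mem_univ _, ?_⟩
    rw [hv.1] at hv
    by_contra h'
    rw [if_neg (by simp : ¬(false = true)), if_neg h'] at hv
    exact hc1 hv.2
  · intro g hg
    rw [mem_filter] at hg
    rw [mem_filter]
    refine ⟨mem_univ _, ?_⟩
    unfold key
    simp only [if_neg (by simp : ¬(false = true)), if_pos hg.2]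
  · intro v hv
    rw [mem_filter] at hv
    obtain ⟨-, hv⟩ := hv
    unfold key at hv
    rw [Prod.mk.injEq] at hv
    ext
    · rfl
    · exact hv.1.symm
  · intro g hg
    rfl

lemma fiber_A {c : G} (hc : c ^ 2 ≠ 1) :
    ((univ : Finset (GenDihedral G)).filter fun v => key c v = (false, c)).card
      = ((univ : Finset G).filter fun g => ¬(g ^ 2 = 1)).card := by
  have hc1 : c ≠ 1 := fun h' => hc (by rw [h', one_pow])
  refine Finset.card_bij' (fun v _ => v.g) (fun g _ => ⟨g, false⟩) ?_ ?_ ?_ ?_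
  · intro v hv
    rw [mem_filter] at hv
    obtain ⟨-, hv⟩ := hv
    unfold key at hv
    rw [Prod.mk.injEq] at hv
    rw [mem_filter]
    refine ⟨mem_univ _, ?_⟩
    rw [hv.1] at hv
    intro h'
    rw [if_neg (by simp : ¬(false = true)), if_pos h'] at hv
    exact hc1 hv.2.symm
  · intro g hg
    rw [mem_filter] at hg
    rw [mem_filter]
    refine ⟨mem_univ _, ?_⟩
    unfold key
    simp only [if_neg (by simp : ¬(false = true)), if_neg hg.2]
  · intro v hv
    rw [mem_filter] at hv
    obtain ⟨-, hv⟩ := hv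
    unfold key at hv
    rw [Prod.mk.injEq] at hv
    ext
    · rfl
    · exact hv.1.symm
  · intro g hg
    rfl

lemma fiberG {s : G} (h : G) (hh : h ^ 2 = s) :
    ((univ : Finset G).filter fun g => g ^ 2 = s).card
      = ((univ : Finset G).filter fun g => g ^ 2 = 1).card := by
  refine Finset.card_bij' (fun g _ => h⁻¹ * g) (fun a _ => h * a) ?_ ?_ ?_ ?_
  · intro g hg
    rw [mem_filter] at hg ⊢
    refine ⟨mem_univ _, ?_⟩
    rw [mul_pow, inv_pow, hh, hg.2, inv_mul_cancel]
  · intro a ha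
    rw [mem_filter] at ha ⊢
    refine ⟨mem_univ _, ?_⟩
    rw [mul_pow, hh, ha.2, mul_one]
  · intro g hg
    show h * (h⁻¹ * g) = g
    rw [mul_inv_cancel_left]
  · intro a ha
    show h⁻¹ * (h * a) = a
    rw [inv_mul_cancel_left]

lemma fiber_B {c : G} (s : G) (hs : s ∈ (univ : Finset G).image (fun g => g ^ 2)) :
    ((univ : Finset (GenDihedral G)).filter fun v => key c v = (true, s)).card
      = ((univ : Finset G).filter fun g => g ^ 2 = 1).card := by
  rw [mem_image] at hs
  obtain ⟨h, -, hh⟩ := hs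
  rw [← fiberG h hh]
  refine Finset.card_bij' (fun v _ => v.g) (fun g _ => ⟨g, true⟩) ?_ ?_ ?_ ?_
  · intro v hv
    rw [mem_filter] at hv
    obtain ⟨-, hv⟩ := hv
    rw [mem_filter]
    refine ⟨mem_univ _, ?_⟩
    show v.g ^ 2 = s
    obtain ⟨g, b⟩ := v
    cases b
    · rw [key_false] at hv
      exact absurd (congrArg Prod.fst hv) (by simp)
    · rw [key_true] at hv
      exact congrArg Prod.snd hv
  · intro g hg
    rw [mem_filter] at hg
    rw [mem_filter]
    exact ⟨mem_univ _, by rw [key_true, hg.2]⟩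
  · intro v hv
    rw [mem_filter] at hv
    obtain ⟨-, hv⟩ := hv
    show (⟨v.g, true⟩ : GenDihedral G) = v
    obtain ⟨g, b⟩ := v
    cases b
    · rw [key_false] at hv
      exact absurd (congrArg Prod.fst hv) (by simp)
    · rfl
  · intro g hg
    rfl

lemma card_sq_image :
    (univ : Finset G).card
      = ((univ : Finset G).image (fun g => g ^ 2)).card
        * ((univ : Finset G).filter fun g => g ^ 2 = 1).card := by
  rw [Finset.card_eq_sum_card_fiberwise
    (f := fun g : G => g ^ 2) (t := (univ : Finset G).image (fun g => g ^ 2))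
    (fun g _ => mem_image_of_mem _ (mem_univ g))]
  rw [Finset.sum_congr rfl (fun s hs => ?_), Finset.sum_const, smul_eq_mul]
  rw [mem_image] at hs
  obtain ⟨h, -, hh⟩ := hs
  exact fiberG h hh

lemma key_image {c : G} (hc : c ^ 2 ≠ 1) :
    (univ : Finset (GenDihedral G)).image (key c)
      = insert (false, c) (insert (false, (1 : G))
          (((univ : Finset G).image (fun g => g ^ 2)).image (fun s => (true, s)))) := by
  ext p
  rw [mem_insert, mem_insert]
  constructor
  · intro hp
    rw [mem_image] at hp
    obtain ⟨v, -, rfl⟩ := hp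
    obtain ⟨g, b⟩ := v
    cases b
    · rw [key_false]
      by_cases hg : g ^ 2 = 1
      · rw [if_pos hg]; exact Or.inr (Or.inl rfl)
      · rw [if_neg hg]; exact Or.inl rfl
    · refine Or.inr (Or.inr ?_)
      rw [key_true, mem_image]
      exact ⟨g ^ 2, mem_image_of_mem _ (mem_univ g), rfl⟩
  · rintro (rfl | rfl | hp)
    · rw [mem_image]
      exact ⟨⟨c, false⟩, mem_univ _, by rw [key_false, if_neg hc]⟩
    · rw [mem_image]
      exact ⟨⟨1, false⟩, mem_univ _, by rw [key_false, if_pos (one_pow 2)]⟩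
    · rw [mem_image] at hp ⊢
      obtain ⟨s, hs, rfl⟩ := hp
      rw [mem_image] at hs
      obtain ⟨g, -, rfl⟩ := hs
      exact ⟨⟨g, true⟩, mem_univ _, key_true c g⟩

end GenDihedral

open GenDihedral Finset in
theorem stmt18_aux {G : Type} [CommGroup G] [Fintype G] [DecidableEq G]
    (hna : ∃ g : G, g ^ 2 ≠ 1) (n z : ℕ) (hn : n = Fintype.card G)
    (hz : z = (Finset.univ.filter fun g : G => g ^ 2 = 1).card) (hz2 : 2 ≤ z)
    (i : ℕ) (hi1 : 2 * n - n / z - 1 ≤ i) (hi2 : i ≤ 2 * n - 2) :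
    numResolvingSets (commGraph G) i =
      z ^ (2 * n - i) * Nat.choose (n / z + 1) (2 * n - i) +
        (n - z) * z ^ (2 * n - i - 1) * Nat.choose (n / z + 1) (2 * n - i - 1) := by
  classical
  obtain ⟨c, hc⟩ := hna
  have hzpos : 0 < z := by omega
  obtain ⟨t, htmem, ht1⟩ :=
    Finset.exists_mem_ne (s := (univ : Finset G).filter fun g => g ^ 2 = 1)
      (by rw [← hz]; omega) (1 : G)
  rw [mem_filter] at htmem
  have ht : t ^ 2 = 1 := htmem.2
  have hc1 : c ≠ 1 := fun h' => hc (by rw [h', one_pow])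
  have hnz_le : z ≤ n := by
    rw [hn, hz, ← Finset.card_univ (α := G)]
    exact Finset.card_filter_le _ _
  have hnA : ((univ : Finset G).filter fun g => ¬(g ^ 2 = 1)).card = n - z := by
    have h' := Finset.card_filter_add_card_filter_not
      (s := (univ : Finset G)) (p := fun g => g ^ 2 = 1)
    rw [Finset.card_univ] at h'
    omega
  have hm : ((univ : Finset G).image (fun g => g ^ 2)).card = n / z := by
    have h1 : n = ((univ : Finset G).image (fun g => g ^ 2)).card * z := by
      rw [hn, hz, ← Finset.card_univ (α := G)]
      exact card_sq_image
    rw [h1, Nat.mul_div_cancel _ hzpos]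
  have hcard2n : Fintype.card (GenDihedral G) = 2 * n := by
    rw [Fintype.card_congr
      (⟨fun x : GenDihedral G => (x.g, x.b), fun p => ⟨p.1, p.2⟩, fun _ => rfl, fun _ => rfl⟩ :
        GenDihedral G ≃ G × Bool)]
    rw [Fintype.card_prod, Fintype.card_bool, hn]
    ring
  have hn2 : 2 ≤ n := le_trans hz2 hnz_le
  set k := 2 * n - i with hk
  have hk2 : 2 ≤ k := by omega
  have h1 : numResolvingSets (commGraph G) i
      = ((univ : Finset (Finset (GenDihedral G))).filter fun W : Finset (GenDihedral G) =>
          IsResolvingSet (commGraph G) ↑W ∧ W.card = i).card := by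
    unfold numResolvingSets
    rw [← Set.ncard_coe_finset]
    congr 1
    ext W
    simp only [Finset.coe_filter, Set.mem_setOf_eq, mem_univ, true_and]
  have h2 : ((univ : Finset (Finset (GenDihedral G))).filter fun W : Finset (GenDihedral G) =>
          IsResolvingSet (commGraph G) ↑W ∧ W.card = i).card
      = ((univ : Finset (Finset (GenDihedral G))).filter fun F =>
          F.card = k ∧ ∀ u ∈ F, ∀ v ∈ F, key c u = key c v → u = v).card := by
    refine Finset.card_bij' (fun W _ => Wᶜ) (fun F _ => Fᶜ) ?_ ?_ ?_ ?_
    · intro W hW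
      rw [mem_filter] at hW
      obtain ⟨-, hres, hWc⟩ := hW
      rw [mem_filter]
      refine ⟨mem_univ _, ?_, ?_⟩
      · rw [Finset.card_compl, hcard2n, hWc]
      · intro u hu v hv hkey
        by_contra huv
        rcases (resolving_iff hc ht ht1 W).mp hres u v huv hkey with h' | h'
        · exact (Finset.mem_compl.mp hu) h'
        · exact (Finset.mem_compl.mp hv) h'
    · intro F hF
      rw [mem_filter] at hF
      obtain ⟨-, hFc, hinj⟩ := hF
      rw [mem_filter]
      refine ⟨mem_univ _, ?_, ?_⟩
      · rw [resolving_iff hc ht ht1]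
        intro u v huv hkey
        by_contra h'
        push_neg at h'
        exact huv (hinj u (Finset.notMem_compl.mp h'.1) v (Finset.notMem_compl.mp h'.2) hkey)
      · rw [Finset.card_compl, hcard2n, hFc]
        omega
    · intro W _
      exact compl_compl W
    · intro F _
      exact compl_compl F
  rw [h1, h2, card_injOn_eq (key c) k, key_image hc]
  set T := insert (false, (1 : G))
    (((univ : Finset G).image (fun g => g ^ 2)).image (fun s => ((true, s) : Bool × G)))
    with hT
  have haT : ((false, c) : Bool × G) ∉ T := by
    rw [hT, mem_insert]
    push_neg
    refine ⟨?_, ?_⟩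
    · intro h'
      exact hc1 (congrArg Prod.snd h')
    · rw [mem_image]
      rintro ⟨s, -, h'⟩
      exact absurd (congrArg Prod.fst h') (by simp)
  have hTcard : T.card = n / z + 1 := by
    rw [hT, card_insert_of_notMem ?_, Finset.card_image_of_injective _ ?_, hm]
    · intro s1 s2 h'
      exact congrArg Prod.snd h'
    · rw [mem_image]
      rintro ⟨s, -, h'⟩
      exact absurd (congrArg Prod.fst h') (by simp)
  have hwT : ∀ s' ∈ T, ((univ : Finset (GenDihedral G)).filter fun v => key c v = s').card = z := by
    intro s' hs'
    rw [hT, mem_insert] at hs'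
    rcases hs' with rfl | hs'
    · rw [fiber_Z hc, ← hz]
    · rw [mem_image] at hs'
      obtain ⟨s, hs, rfl⟩ := hs'
      rw [fiber_B s hs, ← hz]
  obtain ⟨k', hk'⟩ : ∃ k', k = k' + 1 := ⟨k - 1, by omega⟩
  rw [hk', sum_powersetCard_insert_split haT k' z _ hwT, hTcard, fiber_A hc, hnA]
  simp only [Nat.add_sub_cancel]

open GenDihedral in
/-- If `z = |{g : g² = e}| ≥ 2`, then for every `i` with `2n - n/z - 1 ≤ i ≤ 2n - 2`,
the number `sᵢ` of resolving sets of cardinality `i` of the commuting graph of a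
non-abelian `D(G)` equals
`z^{2n-i} · C(n/z + 1, 2n - i) + (n - z) · z^{2n-i-1} · C(n/z + 1, 2n - i - 1)`. -/
theorem stmt18 {G : Type} [CommGroup G] [Fintype G] [DecidableEq G]
    (hna : ∃ g : G, g ^ 2 ≠ 1) (n z : ℕ) (hn : n = Fintype.card G)
    (hz : z = (Finset.univ.filter fun g : G => g ^ 2 = 1).card) (hz2 : 2 ≤ z)
    (i : ℕ) (hi1 : 2 * n - n / z - 1 ≤ i) (hi2 : i ≤ 2 * n - 2) :
    numResolvingSets (commGraph G) i =
      z ^ (2 * n - i) * Nat.choose (n / z + 1) (2 * n - i) +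
        (n - z) * z ^ (2 * n - i - 1) * Nat.choose (n / z + 1) (2 * n - i - 1) := by
  exact stmt18_aux hna n z hn hz hz2 i hi1 hi2
end
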